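/- Let k be a field of characteristic zero, q ∈ k \ {0,1}, a ∈ k[h] monic of degree N > 1, B the Smith algebra with relations HY = qYH, [X,Y] = a(qH) − a(H), XH = qHX, and Ω = YX − a(H). Then the quotient B/(Ω) is isomorphic to the generalized Weyl algebra A(a,q), via the map sending the classes of Y, H, X to y, h, x. -/

import Mathlib

open Polynomial

/-- Generators: `ι 0 = Y`, `ι 1 = H`, `ι 2 = X`. Defining relations of the
Smith algebra `B_l` with `l(H) = a(qH) − a(H)`:
`HY = q·YH`, `XY − YX = l(H)`, `XH = q·HX`. -/
inductive smithRel (k : Type*) [CommRing k] (q : k) (a : Polynomial k) :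
    FreeAlgebra k (Fin 3) → FreeAlgebra k (Fin 3) → Prop
  | hy : smithRel k q a (FreeAlgebra.ι k 1 * FreeAlgebra.ι k 0)
      (q • (FreeAlgebra.ι k 0 * FreeAlgebra.ι k 1))
  | xy : smithRel k q a (FreeAlgebra.ι k 2 * FreeAlgebra.ι k 0)
      (FreeAlgebra.ι k 0 * FreeAlgebra.ι k 2 +
        (Polynomial.aeval (q • FreeAlgebra.ι k 1) a -
          Polynomial.aeval (FreeAlgebra.ι k 1) a))
  | xh : smithRel k q a (FreeAlgebra.ι k 2 * FreeAlgebra.ι k 1)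
      (q • (FreeAlgebra.ι k 1 * FreeAlgebra.ι k 2))

/-- The Smith algebra `B` associated to `q` and `a`. -/
abbrev Smith (k : Type*) [CommRing k] (q : k) (a : Polynomial k) :=
  RingQuot (smithRel k q a)

/-- `Y ∈ B`. -/
noncomputable def Smith.Y (k : Type*) [CommRing k] (q : k) (a : Polynomial k) :
    Smith k q a :=
  RingQuot.mkAlgHom k (smithRel k q a) (FreeAlgebra.ι k 0)

/-- `H ∈ B`. -/
noncomputable def Smith.H (k : Type*) [CommRing k] (q : k) (a : Polynomial k) :
    Smith k q a :=
  RingQuot.mkAlgHom k (smithRel k q a) (FreeAlgebra.ι k 1)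

/-- `X ∈ B`. -/
noncomputable def Smith.X (k : Type*) [CommRing k] (q : k) (a : Polynomial k) :
    Smith k q a :=
  RingQuot.mkAlgHom k (smithRel k q a) (FreeAlgebra.ι k 2)

/-- `Ω = YX − a(H) ∈ B`. -/
noncomputable def Smith.Omega (k : Type*) [CommRing k] (q : k) (a : Polynomial k) :
    Smith k q a :=
  Smith.Y k q a * Smith.X k q a - Polynomial.aeval (Smith.H k q a) a

/-- Generators: `ι 0 = y`, `ι 1 = h`, `ι 2 = x`. Defining relations of the
quantum generalized Weyl algebra `A(a,q)`:
`xh = q·hx`, `hy = q·yh`, `yx = a(h)`, `xy = a(qh)`. -/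
inductive gwaRel (k : Type*) [CommRing k] (q : k) (a : k[X]) :
    FreeAlgebra k (Fin 3) → FreeAlgebra k (Fin 3) → Prop
  | xh : gwaRel k q a (FreeAlgebra.ι k 2 * FreeAlgebra.ι k 1)
      (q • (FreeAlgebra.ι k 1 * FreeAlgebra.ι k 2))
  | hy : gwaRel k q a (FreeAlgebra.ι k 1 * FreeAlgebra.ι k 0)
      (q • (FreeAlgebra.ι k 0 * FreeAlgebra.ι k 1))
  | yx : gwaRel k q a (FreeAlgebra.ι k 0 * FreeAlgebra.ι k 2)
      (aeval (FreeAlgebra.ι k 1) a)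
  | xy : gwaRel k q a (FreeAlgebra.ι k 2 * FreeAlgebra.ι k 0)
      (aeval (q • FreeAlgebra.ι k 1) a)

/-- The quantum generalized Weyl algebra `A(a,q)`. -/
abbrev GWA (k : Type*) [CommRing k] (q : k) (a : k[X]) := RingQuot (gwaRel k q a)

section Aux

variable (k : Type*) [CommRing k] (q : k) (a : k[X])

/-- The images of the generators in the GWA. -/
noncomputable def gwaGen (i : Fin 3) : GWA k q a :=
  RingQuot.mkAlgHom k (gwaRel k q a) (FreeAlgebra.ι k i)

/-- The map from the free algebra to the GWA. -/
noncomputable def smithToGWAFree : FreeAlgebra k (Fin 3) →ₐ[k] GWA k q a :=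
  FreeAlgebra.lift k (gwaGen k q a)

lemma smithToGWAFree_ι (i : Fin 3) :
    smithToGWAFree k q a (FreeAlgebra.ι k i) = gwaGen k q a i := by
  simp [smithToGWAFree]

lemma smithToGWAFree_rel : ∀ ⦃u v⦄, smithRel k q a u v →
    smithToGWAFree k q a u = smithToGWAFree k q a v := by
  intro u v h
  cases h with
  | hy =>
    have h1 := RingQuot.mkAlgHom_rel k (gwaRel.hy (k := k) (q := q) (a := a))
    simp only [map_mul, map_smul, smithToGWAFree_ι, gwaGen] at h1 ⊢
    exact h1
  | xy =>
    have h1 := RingQuot.mkAlgHom_rel k (gwaRel.xy (k := k) (q := q) (a := a))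
    have h2 := RingQuot.mkAlgHom_rel k (gwaRel.yx (k := k) (q := q) (a := a))
    simp only [map_mul, map_add, map_sub, map_smul, smithToGWAFree_ι, gwaGen,
      ← Polynomial.aeval_algHom_apply] at h1 h2 ⊢
    rw [h1, h2]
    abel
  | xh =>
    have h1 := RingQuot.mkAlgHom_rel k (gwaRel.xh (k := k) (q := q) (a := a))
    simp only [map_mul, map_smul, smithToGWAFree_ι, gwaGen] at h1 ⊢
    exact h1

/-- The map from the Smith algebra to the GWA. -/
noncomputable def smithToGWA : Smith k q a →ₐ[k] GWA k q a :=
  RingQuot.liftAlgHom k ⟨smithToGWAFree k q a, smithToGWAFree_rel k q a⟩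

lemma smithToGWA_mk (u : FreeAlgebra k (Fin 3)) :
    smithToGWA k q a (RingQuot.mkAlgHom k (smithRel k q a) u) =
      smithToGWAFree k q a u :=
  RingQuot.liftAlgHom_mkAlgHom_apply _ _ _ _

lemma smithToGWA_Omega : smithToGWA k q a (Smith.Omega k q a) = 0 := by
  have h2 := RingQuot.mkAlgHom_rel k (gwaRel.yx (k := k) (q := q) (a := a))
  simp only [map_mul, ← Polynomial.aeval_algHom_apply] at h2
  simp only [Smith.Omega, Smith.Y, Smith.H, Smith.X, map_sub, map_mul,
    ← Polynomial.aeval_algHom_apply, smithToGWA_mk, smithToGWAFree_ι, gwaGen]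
  rw [h2]
  abel

/-- The quotient of the Smith algebra by `(Ω)`. -/
noncomputable abbrev SmithQuot :=
  RingQuot (fun u v : Smith k q a => u = Smith.Omega k q a ∧ v = 0)

/-- The forward map of the isomorphism. -/
noncomputable def quotToGWA : SmithQuot k q a →ₐ[k] GWA k q a :=
  RingQuot.liftAlgHom k ⟨smithToGWA k q a, by
    rintro u v ⟨rfl, rfl⟩
    simpa using smithToGWA_Omega k q a⟩

lemma quotToGWA_mk (u : Smith k q a) :
    quotToGWA k q a (RingQuot.mkAlgHom k _ u) = smithToGWA k q a u :=
  RingQuot.liftAlgHom_mkAlgHom_apply _ _ _ _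

/-- The composed projection from the free algebra to the quotient. -/
noncomputable def proj : FreeAlgebra k (Fin 3) →ₐ[k] SmithQuot k q a :=
  (RingQuot.mkAlgHom k _).comp (RingQuot.mkAlgHom k (smithRel k q a))

lemma proj_rel ⦃u v : FreeAlgebra k (Fin 3)⦄ (h : smithRel k q a u v) :
    proj k q a u = proj k q a v :=
  congrArg (RingQuot.mkAlgHom k _) (RingQuot.mkAlgHom_rel k h)

lemma proj_Omega :
    proj k q a (FreeAlgebra.ι k 0) * proj k q a (FreeAlgebra.ι k 2) =
      Polynomial.aeval (proj k q a (FreeAlgebra.ι k 1)) a := by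
  have h0 : RingQuot.mkAlgHom k
      (fun u v : Smith k q a => u = Smith.Omega k q a ∧ v = 0)
      (Smith.Omega k q a) = 0 := by
    have h := RingQuot.mkAlgHom_rel (S := k)
      (s := fun u v : Smith k q a => u = Smith.Omega k q a ∧ v = 0)
      (x := Smith.Omega k q a) (y := 0) ⟨rfl, rfl⟩
    rwa [map_zero] at h
  have h1 : RingQuot.mkAlgHom k
      (fun u v : Smith k q a => u = Smith.Omega k q a ∧ v = 0) (Smith.Y k q a) *
      RingQuot.mkAlgHom k
      (fun u v : Smith k q a => u = Smith.Omega k q a ∧ v = 0) (Smith.X k q a) =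
      Polynomial.aeval (RingQuot.mkAlgHom k
      (fun u v : Smith k q a => u = Smith.Omega k q a ∧ v = 0) (Smith.H k q a)) a := by
    rw [Polynomial.aeval_algHom_apply, ← map_mul, ← sub_eq_zero]
    exact (map_sub _ _ _).symm.trans h0
  have := h1
  simp only [Smith.Y, Smith.H, Smith.X, ← Polynomial.aeval_algHom_apply] at this
  simpa only [proj, AlgHom.comp_apply] using this

lemma gwaToQuot_rel : ∀ ⦃u v⦄, gwaRel k q a u v → proj k q a u = proj k q a v := by
  intro u v h
  cases h with
  | xh => exact proj_rel k q a smithRel.xh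
  | hy => exact proj_rel k q a smithRel.hy
  | yx =>
    have := proj_Omega k q a
    simpa only [map_mul, ← Polynomial.aeval_algHom_apply] using this
  | xy =>
    have h1 := proj_rel k q a (smithRel.xy (k := k) (q := q) (a := a))
    have h2 := proj_Omega k q a
    simp only [map_mul, map_add, map_sub, map_smul,
      ← Polynomial.aeval_algHom_apply] at h1 ⊢
    rw [h1, h2]
    abel

/-- The backward map of the isomorphism. -/
noncomputable def gwaToQuot : GWA k q a →ₐ[k] SmithQuot k q a :=
  RingQuot.liftAlgHom k ⟨(FreeAlgebra.lift k fun i => proj k q a (FreeAlgebra.ι k i)),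
    by
      intro u v h
      have key : ∀ w, (FreeAlgebra.lift k fun i => proj k q a (FreeAlgebra.ι k i)) w
          = proj k q a w := by
        intro w
        have : ((FreeAlgebra.lift k fun i => proj k q a (FreeAlgebra.ι k i)) :
            FreeAlgebra k (Fin 3) →ₐ[k] SmithQuot k q a) = proj k q a := by
          apply FreeAlgebra.hom_ext
          funext i
          simp
        rw [this]
      rw [key, key]
      exact gwaToQuot_rel k q a h⟩

lemma gwaToQuot_gen (i : Fin 3) :
    gwaToQuot k q a (RingQuot.mkAlgHom k (gwaRel k q a) (FreeAlgebra.ι k i)) =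
      proj k q a (FreeAlgebra.ι k i) := by
  rw [gwaToQuot, RingQuot.liftAlgHom_mkAlgHom_apply]
  simp

lemma quotToGWA_proj (u : FreeAlgebra k (Fin 3)) :
    quotToGWA k q a (proj k q a u) = smithToGWAFree k q a u := by
  simp only [proj, AlgHom.comp_apply, quotToGWA_mk, smithToGWA_mk]

lemma comp_eq_id_gwa :
    (quotToGWA k q a).comp (gwaToQuot k q a) = AlgHom.id k (GWA k q a) := by
  apply RingQuot.ringQuot_ext'
  apply FreeAlgebra.hom_ext
  funext i
  simp [gwaToQuot_gen, quotToGWA_proj, smithToGWAFree_ι, gwaGen]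

lemma comp_eq_id_quot :
    (gwaToQuot k q a).comp (quotToGWA k q a) = AlgHom.id k (SmithQuot k q a) := by
  apply RingQuot.ringQuot_ext'
  apply RingQuot.ringQuot_ext'
  apply FreeAlgebra.hom_ext
  funext i
  show gwaToQuot k q a (quotToGWA k q a (proj k q a (FreeAlgebra.ι k i))) =
    proj k q a (FreeAlgebra.ι k i)
  rw [quotToGWA_proj, smithToGWAFree_ι, gwaGen, gwaToQuot_gen]

end Aux

/-- Quotienting the Smith algebra `B` by the two-sided ideal generated by the
central element `Ω = YX − a(H)` yields the generalized Weyl algebra `A(a,q)`,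
via an isomorphism sending the classes of `Y`, `H`, `X` to `y`, `h`, `x`. -/
theorem smith_quot_iso_gwa (k : Type*) [Field k] [CharZero k] (q : k)
    (hq0 : q ≠ 0) (hq1 : q ≠ 1) (a : k[X]) (hmonic : a.Monic)
    (hdeg : 1 < a.natDegree) :
    ∃ Φ : RingQuot (fun u v : Smith k q a => u = Smith.Omega k q a ∧ v = 0)
          ≃ₐ[k] GWA k q a,
      Φ (RingQuot.mkAlgHom k _ (Smith.Y k q a)) =
        RingQuot.mkAlgHom k (gwaRel k q a) (FreeAlgebra.ι k 0) ∧
      Φ (RingQuot.mkAlgHom k _ (Smith.H k q a)) =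
        RingQuot.mkAlgHom k (gwaRel k q a) (FreeAlgebra.ι k 1) ∧
      Φ (RingQuot.mkAlgHom k _ (Smith.X k q a)) =
        RingQuot.mkAlgHom k (gwaRel k q a) (FreeAlgebra.ι k 2) := by
  refine ⟨AlgEquiv.ofAlgHom (quotToGWA k q a) (gwaToQuot k q a)
    (comp_eq_id_gwa k q a) (comp_eq_id_quot k q a), ?_, ?_, ?_⟩ <;>
  · show quotToGWA k q a (proj k q a _) = _
    rw [quotToGWA_proj, smithToGWAFree_ι, gwaGen]
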